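/- Fix s > 0, H ∈ (1/2,1), α₁ ≤ α₂, and s < T₁ < T₂. Then e^{(α₁-α₂)T₁}/e^{(α₁-α₂)T₂} ≥ 1 > (∫ₛ^{T₁} e^{-α₂u} φ_H(u,s) du)/(∫ₛ^{T₂} e^{-α₂u} φ_H(u,s) du), where φ_H(u,s) = u^{H-1/2}(u-s)^{H-3/2}; consequently the 2×2 determinant with rows (e^{α₁(T_j - s)}, s^{1/2-H}∫ₛ^{T_j} e^{α₂(T_j-u)} φ_H(u,s) du), j=1,2, is nonzero. -/

import Mathlib

open MeasureTheory intervalIntegral Real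

lemma aux_intInt (H α₂ s : ℝ) (hH₁ : 1/2 < H) (hs : 0 < s) (T : ℝ) (hT : s ≤ T)
    (φ : ℝ → ℝ) (hφ : ∀ u, φ u = u ^ (H - 1/2) * (u - s) ^ (H - 3/2)) :
    IntervalIntegrable (fun u => exp (-α₂ * u) * φ u) volume s T := by
  have h1 : IntervalIntegrable (fun x : ℝ => x ^ (H - 3/2)) volume 0 (T - s) :=
    intervalIntegrable_rpow' (by linarith)
  have h2 : IntervalIntegrable (fun x : ℝ => (x - s) ^ (H - 3/2)) volume s T := by
    simpa using h1.comp_sub_right s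
  have hcont : ContinuousOn (fun u : ℝ => exp (-α₂ * u) * u ^ (H - 1/2)) (Set.uIcc s T) := by
    apply ContinuousOn.mul
    · exact (Real.continuous_exp.comp (continuous_const.mul continuous_id)).continuousOn
    · apply ContinuousOn.rpow_const continuousOn_id
      intro x hx
      rw [Set.uIcc_of_le hT] at hx
      exact Or.inl (ne_of_gt (lt_of_lt_of_le hs hx.1))
  have h3 := h2.mul_continuousOn hcont
  apply h3.congr
  intro u _; dsimp only
  rw [hφ]; ring

theorem mixed_OU_fOU_determinant_nonzero (H α₁ α₂ s T₁ T₂ : ℝ)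
    (hH₁ : 1/2 < H) (hH₂ : H < 1) (hs : 0 < s)
    (hα : α₁ ≤ α₂) (hT₁ : s < T₁) (hT : T₁ < T₂)
    (φ : ℝ → ℝ)
    (hφ : ∀ u, φ u = u ^ (H - 1/2) * (u - s) ^ (H - 3/2)) :
    (exp ((α₁ - α₂) * T₁) / exp ((α₁ - α₂) * T₂) ≥ 1) ∧
    (1 > (∫ u in s..T₁, exp (-α₂ * u) * φ u) / ∫ u in s..T₂, exp (-α₂ * u) * φ u) ∧
    (exp (α₁ * (T₁ - s)) * (s ^ ((1:ℝ)/2 - H) * ∫ u in s..T₂, exp (α₂ * (T₂ - u)) * φ u)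
      - exp (α₁ * (T₂ - s)) * (s ^ ((1:ℝ)/2 - H) * ∫ u in s..T₁, exp (α₂ * (T₁ - u)) * φ u)
      ≠ 0) := by
  set f : ℝ → ℝ := fun u => exp (-α₂ * u) * φ u with hf
  have hint₁ : IntervalIntegrable f volume s T₁ :=
    aux_intInt H α₂ s hH₁ hs T₁ hT₁.le φ hφ
  have hint₂ : IntervalIntegrable f volume s T₂ :=
    aux_intInt H α₂ s hH₁ hs T₂ (by linarith) φ hφ
  have hint₃ : IntervalIntegrable f volume T₁ T₂ := hint₁.symm.trans hint₂
  have hpos : ∀ u, s < u → 0 < f u := by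
    intro u hu
    rw [hf]
    simp only
    rw [hφ]
    have h0 : 0 < u := lt_trans hs hu
    exact mul_pos (exp_pos _) (mul_pos (rpow_pos_of_pos h0 _) (rpow_pos_of_pos (sub_pos.mpr hu) _))
  have hJ₁ : 0 < ∫ u in s..T₁, f u := by
    apply intervalIntegral.intervalIntegral_pos_of_pos_on hint₁ _ hT₁
    intro x hx; exact hpos x hx.1
  have htail : 0 < ∫ u in T₁..T₂, f u := by
    apply intervalIntegral.intervalIntegral_pos_of_pos_on hint₃ _ hT
    intro x hx; exact hpos x (lt_trans hT₁ hx.1)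
  have hsplit : (∫ u in s..T₁, f u) + ∫ u in T₁..T₂, f u = ∫ u in s..T₂, f u :=
    intervalIntegral.integral_add_adjacent_intervals hint₁ hint₃
  have hJlt : (∫ u in s..T₁, f u) < ∫ u in s..T₂, f u := by linarith
  have hJ₂ : 0 < ∫ u in s..T₂, f u := by linarith
  refine ⟨?_, ?_, ?_⟩
  · rw [ge_iff_le, le_div_iff₀ (exp_pos _), one_mul]
    exact exp_le_exp.mpr (by nlinarith)
  · rw [gt_iff_lt, div_lt_one hJ₂]
    exact hJlt
  · have hre : ∀ T : ℝ, (∫ u in s..T, exp (α₂ * (T - u)) * φ u)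
        = exp (α₂ * T) * ∫ u in s..T, f u := by
      intro T
      rw [← intervalIntegral.integral_const_mul]
      apply intervalIntegral.integral_congr
      intro u _
      rw [hf]
      simp only
      rw [← mul_assoc, ← Real.exp_add]
      ring_nf
    rw [hre T₁, hre T₂]
    have hEF : exp (α₁ * (T₂ - s)) * exp (α₂ * T₁) ≤ exp (α₁ * (T₁ - s)) * exp (α₂ * T₂) := by
      rw [← exp_add, ← exp_add]
      exact exp_le_exp.mpr (by nlinarith)
    have hc : (0:ℝ) < s ^ ((1:ℝ)/2 - H) := rpow_pos_of_pos hs _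
    have hE : (0:ℝ) < exp (α₁ * (T₁ - s)) * exp (α₂ * T₂) :=
      mul_pos (exp_pos _) (exp_pos _)
    apply ne_of_gt
    rw [sub_pos]
    nlinarith [mul_lt_mul' hEF (mul_lt_mul_of_pos_left hJlt hc) (by positivity) hE]
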